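/- If Y and C are independent real-valued random variables, C has survival function H(t) = P(C > t) (continuous), δ = 1_{Y ≤ C}, and T = min(Y, C), then for any bounded measurable function g, E[(δ/H(T)) · g(T)] = E[g(Y)] (interpreting δ/H(T) as 0 when δ = 0). -/

import Mathlib

open MeasureTheory ProbabilityTheory Filter

/-- In the random censorship model: if `Y` and `C` are independent, `H t = P(C > t)` is
continuous, `δ = 1_{Y ≤ C}`, `T = min(Y, C)`, and `H(Y) > 0` a.s., then for any bounded
measurable `g`, `E[(δ/H(T)) g(T)] = E[g(Y)]` (the term being `0` when `δ = 0`). -/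
theorem stmt0 {Ω : Type*} [MeasurableSpace Ω] (μ : Measure Ω) [IsProbabilityMeasure μ]
    (Y C : Ω → ℝ) (hY : Measurable Y) (hC : Measurable C)
    (hindep : IndepFun Y C μ)
    (H : ℝ → ℝ) (hH : ∀ t, H t = (μ {ω | t < C ω}).toReal)
    (hHcont : Continuous H)
    (hpos : ∀ᵐ ω ∂μ, 0 < H (Y ω))
    (g : ℝ → ℝ) (hg : Measurable g) (M : ℝ) (hgb : ∀ t, |g t| ≤ M) :
    ∫ ω, (if Y ω ≤ C ω then g (min (Y ω) (C ω)) / H (min (Y ω) (C ω)) else 0) ∂μ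
      = ∫ ω, g (Y ω) ∂μ := by
  set μY := μ.map Y with hμY
  set μC := μ.map C with hμC
  haveI : IsProbabilityMeasure μY := Measure.isProbabilityMeasure_map hY.aemeasurable
  haveI : IsProbabilityMeasure μC := Measure.isProbabilityMeasure_map hC.aemeasurable
  have hHm : Measurable H := hHcont.measurable
  -- H in terms of μC
  have hH' : ∀ t, H t = (μC (Set.Ioi t)).toReal := by
    intro t
    rw [hH t, hμC, Measure.map_apply hC measurableSet_Ioi]
    rfl
  -- key : μC [y, ∞) = H y
  have key : ∀ y : ℝ, (μC (Set.Ici y)).toReal = H y := by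
    intro y
    have h1 : H y ≤ (μC (Set.Ici y)).toReal := by
      rw [hH']
      exact ENNReal.toReal_mono (measure_ne_top _ _)
        (measure_mono fun c hc => Set.mem_Ici.mpr (le_of_lt hc))
    have h2 : ∀ t, t < y → (μC (Set.Ici y)).toReal ≤ H t := by
      intro t ht
      rw [hH']
      exact ENNReal.toReal_mono (measure_ne_top _ _)
        (measure_mono fun c hc => lt_of_lt_of_le ht hc)
    have htend : Tendsto (fun n : ℕ => H (y - 1 / (n + 1))) atTop (nhds (H y)) := by
      have : Tendsto (fun n : ℕ => y - 1 / (n + 1)) atTop (nhds y) := by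
        have h := Tendsto.const_sub y tendsto_one_div_add_atTop_nhds_zero_nat
        simpa using h
      exact (hHcont.continuousAt.tendsto.comp this)
    have h3 : (μC (Set.Ici y)).toReal ≤ H y := by
      refine ge_of_tendsto htend (Eventually.of_forall fun n => ?_)
      refine h2 _ ?_
      have : (0:ℝ) < 1 / (n + 1) := by positivity
      linarith
    linarith
  -- the integrand as F ∘ (Y, C)
  set F : ℝ × ℝ → ℝ := fun p => if p.1 ≤ p.2 then g p.1 / H p.1 else 0 with hFdef
  have hFmeas : Measurable F := by
    refine Measurable.ite (measurableSet_le measurable_fst measurable_snd) ?_ measurable_const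
    exact (hg.comp measurable_fst).div (hHm.comp measurable_fst)
  have hpoint : ∀ ω, (if Y ω ≤ C ω then g (min (Y ω) (C ω)) / H (min (Y ω) (C ω)) else 0)
      = F (Y ω, C ω) := by
    intro ω
    by_cases h : Y ω ≤ C ω <;> simp [hFdef, h, min_eq_left]
  -- sections are indicators
  have hsec : ∀ y : ℝ, (fun c => F (y, c)) = (Set.Ici y).indicator (fun _ => g y / H y) := by
    intro y
    funext c
    by_cases h : y ≤ c <;> simp [hFdef, Set.indicator_apply, h]
  have hinner : ∀ y : ℝ, ∫ c, F (y, c) ∂μC = H y * (g y / H y) := by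
    intro y
    rw [hsec y, integral_indicator_const _ measurableSet_Ici, measureReal_def, key y, smul_eq_mul]
  -- law of the pair
  have hpair : μ.map (fun ω => (Y ω, C ω)) = μY.prod μC := by
    rw [hμY, hμC]
    exact (indepFun_iff_map_prod_eq_prod_map_map hY.aemeasurable hC.aemeasurable).mp hindep
  -- integrability of F on the product
  have hM0 : 0 ≤ M := le_trans (abs_nonneg _) (hgb 0)
  have hFint : Integrable F (μY.prod μC) := by
    rw [integrable_prod_iff hFmeas.aestronglyMeasurable]
    constructor
    · refine Eventually.of_forall fun y => ?_
      rw [hsec y]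
      exact (integrable_const _).indicator measurableSet_Ici
    · have hb : ∀ y : ℝ, ∫ c, ‖F (y, c)‖ ∂μC = H y * (|g y| / H y) := by
        intro y
        have : (fun c => ‖F (y, c)‖) = (Set.Ici y).indicator (fun _ => |g y / H y|) := by
          funext c
          by_cases h : y ≤ c <;> simp [hFdef, Set.indicator_apply, h, Real.norm_eq_abs, abs_div]
        rw [this, integral_indicator_const _ measurableSet_Ici, measureReal_def, key y, smul_eq_mul, abs_div]
        have h0 : 0 ≤ H y := by rw [← key y]; exact ENNReal.toReal_nonneg
        rw [abs_of_nonneg h0]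
      refine Integrable.mono' (integrable_const M) ?_ ?_
      · apply Measurable.aestronglyMeasurable
        simp only [hb]
        exact hHm.mul ((hg.abs).div hHm)
      · refine Eventually.of_forall fun y => ?_
        rw [hb y, Real.norm_eq_abs]
        have h0 : 0 ≤ H y := by rw [← key y]; exact ENNReal.toReal_nonneg
        by_cases hz : H y = 0
        · simp [hz, hM0]
        · rw [mul_div_cancel₀ _ hz, abs_of_nonneg (abs_nonneg _)]
          exact hgb y
  -- assemble
  have hstep1 : ∫ ω, (if Y ω ≤ C ω then g (min (Y ω) (C ω)) / H (min (Y ω) (C ω)) else 0) ∂μ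
      = ∫ p, F p ∂(μY.prod μC) := by
    rw [← hpair, integral_map (hY.prodMk hC).aemeasurable hFmeas.aestronglyMeasurable]
    exact integral_congr_ae (Eventually.of_forall hpoint)
  rw [hstep1, integral_prod _ hFint]
  have hposY : ∀ᵐ y ∂μY, 0 < H y := by
    rw [hμY, ae_map_iff hY.aemeasurable (measurableSet_lt measurable_const hHm)]
    exact hpos
  have : ∫ y, (∫ c, F (y, c) ∂μC) ∂μY = ∫ y, g y ∂μY := by
    refine integral_congr_ae ?_
    filter_upwards [hposY] with y hy
    rw [hinner y, mul_div_cancel₀ _ (ne_of_gt hy)]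
  rw [this, hμY, integral_map hY.aemeasurable hg.aestronglyMeasurable]
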